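/- Let a > 1, α > 0, p ≥ 1, and let C = C(a,α) be the constant from the sup-domination lemma. Let (M,d) be a metric space, {F_k} Borel subsets of M, I = [k₀, k₁] a finite interval of nonnegative integers, μ a probability measure, f ≥ 0 a probability density w.r.t. μ, and ε > 0. Set φ = ∑_{k∈I} (1+k)^α a^k 𝟙_{F_k} and ψ_ε(x) = ∑_{k∈I} sup_{y: d(x,y)^p ≤ Cε(1+k)^α a^k} (1+k)^α a^k 𝟙_{F_k}(y). Then ∫ φ f dμ ≤ (1/ε) W_p^p(fμ, μ) + C ∫ ψ_ε dμ. -/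

import Mathlib

open MeasureTheory Finset

attribute [local instance] Classical.propDecidable

/-- `W_p^p(μ, ν)`: the `p`-th power of the Kantorovich distance of order `p`, as an
infimum over couplings of the `p`-th moment of the distance. -/
noncomputable def wassersteinPow {M : Type*} [MeasurableSpace M] [PseudoMetricSpace M]
    (p : ℝ) (μ ν : Measure M) : ENNReal :=
  ⨅ σ ∈ {σ : Measure (M × M) | σ.map Prod.fst = μ ∧ σ.map Prod.snd = ν},
    ∫⁻ z, ENNReal.ofReal (dist z.1 z.2 ^ p) ∂σ

/-- Lemma 2 of the paper: for `a > 1`, `α > 0`, `p ≥ 1` there is `C = C(a, α)` such that for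
any Borel sets `F_k`, any interval `I = [k₀,k₁]` of nonnegative integers, any probability
density `f` w.r.t. `μ` and any `ε > 0`,
`∫ φ f dμ ≤ ε⁻¹ W_p^p(fμ, μ) + C ∫ ψ_ε dμ`, where
`φ = ∑_{k∈I} (1+k)^α a^k 𝟙_{F_k}` and
`ψ_ε(x) = ∑_{k∈I} sup_{y : d(x,y)^p ≤ Cε(1+k)^α a^k} (1+k)^α a^k 𝟙_{F_k}(y)`. -/

lemma aux_lintegral_const_mul_le {β : Type*} [MeasurableSpace β] (μ : Measure β)
    (r : ENNReal) (hr0 : r ≠ 0) (hrt : r ≠ ⊤) (h : β → ENNReal) :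
    ∫⁻ z, r * h z ∂μ ≤ r * ∫⁻ z, h z ∂μ := by
  have h1 : r⁻¹ * ∫⁻ z, r * h z ∂μ ≤ ∫⁻ z, r⁻¹ * (r * h z) ∂μ :=
    lintegral_const_mul_le r⁻¹ _
  have h2 : ∀ z, r⁻¹ * (r * h z) = h z := by
    intro z
    rw [← mul_assoc, ENNReal.inv_mul_cancel hr0 hrt, one_mul]
  simp only [h2] at h1
  calc ∫⁻ z, r * h z ∂μ = r * (r⁻¹ * ∫⁻ z, r * h z ∂μ) := by
        rw [← mul_assoc, ENNReal.mul_inv_cancel hr0 hrt, one_mul]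
    _ ≤ r * ∫⁻ z, h z ∂μ := mul_le_mul_right h1 r

lemma aux_psi_nonneg {M : Type*} [PseudoMetricSpace M] (a α p C ε : ℝ) (ha0 : 0 < a)
    (F : ℕ → Set M) (k₀ k₁ : ℕ) (x : M) :
    0 ≤ ∑ k ∈ Finset.Icc k₀ k₁, ⨆ y : M,
      (if dist x y ^ p ≤ C * ε * (1 + (k : ℝ)) ^ α * a ^ k ∧ y ∈ F k
        then (1 + (k : ℝ)) ^ α * a ^ k else 0) := by
  refine Finset.sum_nonneg fun k _ => ?_
  have hc0 : 0 ≤ (1 + (k : ℝ)) ^ α * a ^ k := by positivity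
  have hbdd : BddAbove (Set.range fun y : M =>
      (if dist x y ^ p ≤ C * ε * (1 + (k : ℝ)) ^ α * a ^ k ∧ y ∈ F k
        then (1 + (k : ℝ)) ^ α * a ^ k else 0)) := by
    refine ⟨(1 + (k : ℝ)) ^ α * a ^ k, ?_⟩
    rintro _ ⟨z, rfl⟩
    simp only []
    split
    · exact le_rfl
    · exact hc0
  refine le_trans ?_ (le_ciSup hbdd x)
  split
  · exact hc0
  · exact le_rfl


lemma aux_pointwise {M : Type*} [PseudoMetricSpace M] (a α p : ℝ) (ha : 1 < a) (hα : 0 < α)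
    (F : ℕ → Set M) (k₀ k₁ : ℕ) (ε : ℝ) (hε : 0 < ε) (x y : M) :
    (∑ k ∈ Finset.Icc k₀ k₁,
        (1 + (k : ℝ)) ^ α * a ^ k * Set.indicator (F k) (fun _ => (1 : ℝ)) y)
      ≤ ε⁻¹ * dist x y ^ p +
        (a / (a - 1)) * ∑ k ∈ Finset.Icc k₀ k₁, ⨆ z : M,
          (if dist x z ^ p ≤ (a / (a - 1)) * ε * (1 + (k : ℝ)) ^ α * a ^ k ∧ z ∈ F k
            then (1 + (k : ℝ)) ^ α * a ^ k else 0) := by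
  have ha0 : (0:ℝ) < a := lt_trans one_pos ha
  have ha1 : (0:ℝ) < a - 1 := by linarith
  set C : ℝ := a / (a - 1) with hCdef
  have hC : 0 < C := div_pos ha0 ha1
  set c : ℕ → ℝ := fun k => (1 + (k : ℝ)) ^ α * a ^ k with hcdef
  have hcpos : ∀ k, 0 < c k := by
    intro k
    have h1 : (0:ℝ) < 1 + (k:ℝ) := by positivity
    positivity
  set g : ℕ → M → ℝ := fun k z =>
    if dist x z ^ p ≤ C * ε * (1 + (k : ℝ)) ^ α * a ^ k ∧ z ∈ F k then c k else 0 with hgdef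
  have hg0 : ∀ k z, 0 ≤ g k z := by
    intro k z
    simp only [hgdef]
    split
    · exact (hcpos k).le
    · exact le_rfl
  have hgbdd : ∀ k, BddAbove (Set.range (g k)) := by
    intro k
    refine ⟨c k, ?_⟩
    rintro _ ⟨z, rfl⟩
    simp only [hgdef]
    split
    · exact le_rfl
    · exact (hcpos k).le
  have hsup0 : ∀ k, 0 ≤ ⨆ z : M, g k z := fun k => le_trans (hg0 k x) (le_ciSup (hgbdd k) x)
  have hψ0 : 0 ≤ ∑ k ∈ Finset.Icc k₀ k₁, ⨆ z : M, g k z :=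
    Finset.sum_nonneg fun k _ => hsup0 k
  have hd0 : 0 ≤ ε⁻¹ * dist x y ^ p := by positivity
  have hLHS : (∑ k ∈ Finset.Icc k₀ k₁,
      (1 + (k : ℝ)) ^ α * a ^ k * Set.indicator (F k) (fun _ => (1 : ℝ)) y)
      = ∑ k ∈ (Finset.Icc k₀ k₁).filter (fun k => y ∈ F k), c k := by
    rw [Finset.sum_filter]
    refine Finset.sum_congr rfl fun k _ => ?_
    by_cases hy : y ∈ F k
    · simp [hy, Set.indicator_of_mem, hcdef]
    · simp [hy, Set.indicator_of_notMem]
  set S := (Finset.Icc k₀ k₁).filter (fun k => y ∈ F k) with hSdef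
  have key : ∑ k ∈ S, c k ≤ ε⁻¹ * dist x y ^ p + C * ∑ k ∈ Finset.Icc k₀ k₁, ⨆ z : M, g k z := by
    rcases S.eq_empty_or_nonempty with hS | hS
    · rw [hS]
      simp only [Finset.sum_empty]
      have := mul_nonneg hC.le hψ0
      linarith
    · set m := S.max' hS with hmdef
      have hmS : m ∈ S := S.max'_mem hS
      have hmIcc : m ∈ Finset.Icc k₀ k₁ := (Finset.mem_filter.mp hmS).1
      have hymF : y ∈ F m := (Finset.mem_filter.mp hmS).2
      have hsum : ∑ k ∈ S, c k ≤ C * c m := by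
        have hsub : S ⊆ Finset.range (m + 1) := by
          intro k hk
          exact Finset.mem_range.mpr (Nat.lt_succ_of_le (S.le_max' k hk))
        have h1 : ∑ k ∈ S, c k ≤ ∑ k ∈ Finset.range (m + 1), c k :=
          Finset.sum_le_sum_of_subset_of_nonneg hsub (fun k _ _ => (hcpos k).le)
        have h2 : ∑ k ∈ Finset.range (m + 1), c k
            ≤ ∑ k ∈ Finset.range (m + 1), (1 + (m : ℝ)) ^ α * a ^ k := by
          refine Finset.sum_le_sum fun k hk => ?_
          have hk' : k ≤ m := Nat.lt_succ_iff.mp (Finset.mem_range.mp hk)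
          have hkc : ((k:ℝ)) ≤ (m:ℝ) := Nat.cast_le.mpr hk'
          have hbase : (1 + (k:ℝ)) ^ α ≤ (1 + (m:ℝ)) ^ α :=
            Real.rpow_le_rpow (by positivity) (by linarith) hα.le
          exact mul_le_mul_of_nonneg_right hbase (by positivity)
        have h3 : ∑ k ∈ Finset.range (m + 1), (1 + (m : ℝ)) ^ α * a ^ k
            = (1 + (m : ℝ)) ^ α * ((a ^ (m+1) - 1) / (a - 1)) := by
          rw [← Finset.mul_sum, geom_sum_eq (ne_of_gt ha) (m + 1)]
        have h4 : (1 + (m : ℝ)) ^ α * ((a ^ (m+1) - 1) / (a - 1))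
            ≤ (1 + (m : ℝ)) ^ α * (a ^ (m+1) / (a - 1)) := by
          have hm0 : (0:ℝ) ≤ (1 + (m : ℝ)) ^ α := by positivity
          have : (a ^ (m+1) - 1) / (a - 1) ≤ a ^ (m+1) / (a - 1) := by
            gcongr
            · linarith
          exact mul_le_mul_of_nonneg_left this hm0
        have h5 : (1 + (m : ℝ)) ^ α * (a ^ (m+1) / (a - 1)) = C * c m := by
          simp only [hCdef, hcdef, pow_succ]
          field_simp
        linarith
      by_cases hcase : dist x y ^ p ≤ C * ε * (1 + (m : ℝ)) ^ α * a ^ m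
      · have hgy : g m y = c m := by
          simp only [hgdef]
          rw [if_pos ⟨hcase, hymF⟩]
        have h6 : c m ≤ ⨆ z : M, g m z := hgy ▸ le_ciSup (hgbdd m) y
        have h7 : (⨆ z : M, g m z) ≤ ∑ k ∈ Finset.Icc k₀ k₁, ⨆ z : M, g k z :=
          Finset.single_le_sum (fun k _ => hsup0 k) hmIcc
        have h8 : C * c m ≤ C * ∑ k ∈ Finset.Icc k₀ k₁, ⨆ z : M, g k z :=
          mul_le_mul_of_nonneg_left (le_trans h6 h7) hC.le
        linarith
      · push_neg at hcase
        have h9 : C * c m ≤ ε⁻¹ * dist x y ^ p := by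
          have h10 : C * ε * (1 + (m : ℝ)) ^ α * a ^ m < dist x y ^ p := hcase
          have h11 : C * c m = ε⁻¹ * (C * ε * (1 + (m : ℝ)) ^ α * a ^ m) := by
            field_simp [hcdef]
            ring
          rw [h11]
          exact mul_le_mul_of_nonneg_left h10.le (by positivity)
        have h12 : 0 ≤ C * ∑ k ∈ Finset.Icc k₀ k₁, ⨆ z : M, g k z := mul_nonneg hC.le hψ0
        linarith
  rw [hLHS]
  exact key

theorem kantorovich_sum_indicator_bound (a α p : ℝ) (ha : 1 < a) (hα : 0 < α) (hp : 1 ≤ p) :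
    ∃ C : ℝ, 0 < C ∧
      ∀ (M : Type*) [MeasurableSpace M] [PseudoMetricSpace M] (μ : Measure M),
        IsProbabilityMeasure μ →
        ∀ (F : ℕ → Set M), (∀ k, MeasurableSet (F k)) →
        ∀ (k₀ k₁ : ℕ) (f : M → ℝ), Measurable f → 0 ≤ f → Integrable f μ →
          (∫ x, f x ∂μ) = 1 →
        ∀ ε : ℝ, 0 < ε →
        wassersteinPow p (μ.withDensity fun x => ENNReal.ofReal (f x)) μ < ⊤ →
        ∀ ψ : M → ℝ,
          ψ = (fun x => ∑ k ∈ Finset.Icc k₀ k₁, ⨆ y : M,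
            (if dist x y ^ p ≤ C * ε * (1 + (k : ℝ)) ^ α * a ^ k ∧ y ∈ F k
              then (1 + (k : ℝ)) ^ α * a ^ k else 0)) →
          Measurable ψ → Integrable ψ μ →
        ∫ x, (∑ k ∈ Finset.Icc k₀ k₁,
            (1 + (k : ℝ)) ^ α * a ^ k * Set.indicator (F k) (fun _ => (1 : ℝ)) x) * f x ∂μ ≤
          (1 / ε) * (wassersteinPow p (μ.withDensity fun x => ENNReal.ofReal (f x)) μ).toReal +
            C * ∫ x, ψ x ∂μ := by
  have ha0 : (0:ℝ) < a := lt_trans one_pos ha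
  have ha1 : (0:ℝ) < a - 1 := by linarith
  refine ⟨a / (a - 1), div_pos ha0 ha1, ?_⟩
  intro M mM pM μ hμ F hF k₀ k₁ f hfm hf0 hfi hf1 ε hε hW ψ hψdef hψm hψi
  set C : ℝ := a / (a - 1) with hCdef
  have hC : 0 < C := div_pos ha0 ha1
  haveI := hμ
  haveI hMne : Nonempty M := by
    by_contra h
    rw [not_nonempty_iff] at h
    have h1 : μ Set.univ = 1 := measure_univ
    rw [Set.univ_eq_empty_iff.mpr h, measure_empty] at h1
    exact zero_ne_one h1
  set ν := μ.withDensity fun x => ENNReal.ofReal (f x) with hνdef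
  have hfm' : Measurable fun x => ENNReal.ofReal (f x) := ENNReal.measurable_ofReal.comp hfm
  have hνuniv : ν Set.univ = 1 := by
    rw [hνdef, withDensity_apply _ MeasurableSet.univ, setLIntegral_univ,
      ← ofReal_integral_eq_lintegral_ofReal hfi (Filter.Eventually.of_forall hf0), hf1,
      ENNReal.ofReal_one]
  haveI hνp : IsProbabilityMeasure ν := ⟨hνuniv⟩
  set φ : M → ℝ := fun yy => ∑ k ∈ Finset.Icc k₀ k₁,
    (1 + (k : ℝ)) ^ α * a ^ k * Set.indicator (F k) (fun _ => (1:ℝ)) yy with hφdef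
  have hφm : Measurable φ := by
    apply Finset.measurable_sum
    intro k _
    exact (measurable_const.indicator (hF k)).const_mul _
  have hφ0 : ∀ yy, 0 ≤ φ yy := by
    intro yy
    refine Finset.sum_nonneg fun k _ => ?_
    have hind : (0:ℝ) ≤ Set.indicator (F k) (fun _ => (1:ℝ)) yy :=
      Set.indicator_nonneg (fun _ _ => one_pos.le) yy
    have hc0 : (0:ℝ) ≤ (1 + (k : ℝ)) ^ α * a ^ k := by positivity
    exact mul_nonneg hc0 hind
  set B : ℝ := ∑ k ∈ Finset.Icc k₀ k₁, (1 + (k : ℝ)) ^ α * a ^ k with hBdef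
  have hφB : ∀ yy, φ yy ≤ B := by
    intro yy
    refine Finset.sum_le_sum fun k _ => ?_
    have hind : Set.indicator (F k) (fun _ => (1:ℝ)) yy ≤ 1 := by
      by_cases hy : yy ∈ F k <;> simp [hy]
    have hc0 : (0:ℝ) ≤ (1 + (k : ℝ)) ^ α * a ^ k := by positivity
    calc (1 + (k : ℝ)) ^ α * a ^ k * Set.indicator (F k) (fun _ => (1:ℝ)) yy
        ≤ (1 + (k : ℝ)) ^ α * a ^ k * 1 := mul_le_mul_of_nonneg_left hind hc0
      _ = (1 + (k : ℝ)) ^ α * a ^ k := mul_one _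
  have hφf_int : Integrable (fun x => φ x * f x) μ :=
    hfi.bdd_mul (c := B) hφm.aestronglyMeasurable (Filter.Eventually.of_forall fun x => by
      rw [Real.norm_eq_abs, abs_of_nonneg (hφ0 x)]; exact hφB x)
  have hψ0 : ∀ x, 0 ≤ ψ x := by
    intro x
    rw [hψdef]
    exact aux_psi_nonneg a α p C ε ha0 F k₀ k₁ x
  have hψlint : ∫⁻ x, ENNReal.ofReal (ψ x) ∂μ = ENNReal.ofReal (∫ x, ψ x ∂μ) :=
    (ofReal_integral_eq_lintegral_ofReal hψi (Filter.Eventually.of_forall hψ0)).symm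
  have hφ'm : Measurable fun x => ENNReal.ofReal (φ x) := ENNReal.measurable_ofReal.comp hφm
  have hψ'm : Measurable fun x => ENNReal.ofReal (ψ x) := ENNReal.measurable_ofReal.comp hψm
  have hLHS : ENNReal.ofReal (∫ x, φ x * f x ∂μ) = ∫⁻ x, ENNReal.ofReal (φ x) ∂ν := by
    rw [ofReal_integral_eq_lintegral_ofReal hφf_int
        (Filter.Eventually.of_forall fun x => mul_nonneg (hφ0 x) (hf0 x)),
      hνdef, lintegral_withDensity_eq_lintegral_mul μ hfm' hφ'm]
    refine lintegral_congr fun x => ?_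
    simp only [Pi.mul_apply]
    rw [← ENNReal.ofReal_mul (hf0 x), mul_comm]
  set W := wassersteinPow p ν μ with hWdef
  have hWne : W ≠ ⊤ := hW.ne
  have main : ∀ δ : ℝ, 0 < δ →
      ∫ x, φ x * f x ∂μ ≤ (1/ε) * W.toReal + C * ∫ x, ψ x ∂μ + ε⁻¹ * δ := by
    intro δ hδ
    have hlt : W < W + ENNReal.ofReal δ :=
      ENNReal.lt_add_right hWne (ne_of_gt (ENNReal.ofReal_pos.mpr hδ))
    have hiInf : (⨅ σ ∈ {σ : Measure (M × M) | σ.map Prod.fst = ν ∧ σ.map Prod.snd = μ},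
        ∫⁻ z, ENNReal.ofReal (dist z.1 z.2 ^ p) ∂σ) = W := rfl
    have h := hiInf ▸ hlt
    simp only [iInf_lt_iff] at h
    obtain ⟨σ, hσS, hcost⟩ := h
    obtain ⟨hσ1, hσ2⟩ := hσS
    have hl1 : ∫⁻ x, ENNReal.ofReal (φ x) ∂ν = ∫⁻ z, ENNReal.ofReal (φ z.1) ∂σ := by
      rw [← hσ1, lintegral_map hφ'm measurable_fst]
    have hpt : ∀ z : M × M, ENNReal.ofReal (φ z.1) ≤ ENNReal.ofReal C * ENNReal.ofReal (ψ z.2) +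
        ENNReal.ofReal ε⁻¹ * ENNReal.ofReal (dist z.1 z.2 ^ p) := by
      intro z
      have haux := aux_pointwise a α p ha hα F k₀ k₁ ε hε z.2 z.1
      rw [dist_comm z.2 z.1] at haux
      have h1 : φ z.1 ≤ ε⁻¹ * dist z.1 z.2 ^ p + C * ψ z.2 := by
        rw [hφdef, hψdef]
        exact haux
      calc ENNReal.ofReal (φ z.1)
          ≤ ENNReal.ofReal (ε⁻¹ * dist z.1 z.2 ^ p + C * ψ z.2) := ENNReal.ofReal_le_ofReal h1
        _ ≤ ENNReal.ofReal (ε⁻¹ * dist z.1 z.2 ^ p) + ENNReal.ofReal (C * ψ z.2) :=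
            ENNReal.ofReal_add_le
        _ = ENNReal.ofReal C * ENNReal.ofReal (ψ z.2) +
            ENNReal.ofReal ε⁻¹ * ENNReal.ofReal (dist z.1 z.2 ^ p) := by
            rw [ENNReal.ofReal_mul (inv_nonneg.mpr hε.le), ENNReal.ofReal_mul hC.le, add_comm]
    have hmm : Measurable fun z : M × M => ENNReal.ofReal (ψ z.2) :=
      hψ'm.comp measurable_snd
    have hmap2 : ∫⁻ z : M × M, ENNReal.ofReal (ψ z.2) ∂σ = ∫⁻ x, ENNReal.ofReal (ψ x) ∂μ := by
      rw [← hσ2, lintegral_map hψ'm measurable_snd]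
    have hterm1 : ∫⁻ z, ENNReal.ofReal C * ENNReal.ofReal (ψ z.2) ∂σ
        = ENNReal.ofReal C * ENNReal.ofReal (∫ x, ψ x ∂μ) := by
      rw [lintegral_const_mul _ hmm, hmap2, hψlint]
    have hterm2 : ∫⁻ z, ENNReal.ofReal ε⁻¹ * ENNReal.ofReal (dist z.1 z.2 ^ p) ∂σ ≤
        ENNReal.ofReal ε⁻¹ * ∫⁻ z, ENNReal.ofReal (dist z.1 z.2 ^ p) ∂σ :=
      aux_lintegral_const_mul_le σ _ (ne_of_gt (ENNReal.ofReal_pos.mpr (inv_pos.mpr hε)))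
        ENNReal.ofReal_ne_top _
    have hchain : ENNReal.ofReal (∫ x, φ x * f x ∂μ) ≤
        ENNReal.ofReal C * ENNReal.ofReal (∫ x, ψ x ∂μ) +
          ENNReal.ofReal ε⁻¹ * (W + ENNReal.ofReal δ) := by
      rw [hLHS, hl1]
      calc ∫⁻ z, ENNReal.ofReal (φ z.1) ∂σ
          ≤ ∫⁻ z, (ENNReal.ofReal C * ENNReal.ofReal (ψ z.2) +
              ENNReal.ofReal ε⁻¹ * ENNReal.ofReal (dist z.1 z.2 ^ p)) ∂σ := lintegral_mono hpt
        _ = ∫⁻ z, ENNReal.ofReal C * ENNReal.ofReal (ψ z.2) ∂σ +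
            ∫⁻ z, ENNReal.ofReal ε⁻¹ * ENNReal.ofReal (dist z.1 z.2 ^ p) ∂σ :=
            lintegral_add_left (measurable_const.mul hmm) _
        _ ≤ ENNReal.ofReal C * ENNReal.ofReal (∫ x, ψ x ∂μ) +
            ENNReal.ofReal ε⁻¹ * ∫⁻ z, ENNReal.ofReal (dist z.1 z.2 ^ p) ∂σ :=
            add_le_add hterm1.le hterm2
        _ ≤ ENNReal.ofReal C * ENNReal.ofReal (∫ x, ψ x ∂μ) +
            ENNReal.ofReal ε⁻¹ * (W + ENNReal.ofReal δ) := by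
            gcongr
            exact hcost.le
    have ht1 : ENNReal.ofReal C * ENNReal.ofReal (∫ x, ψ x ∂μ) ≠ ⊤ :=
      ENNReal.mul_ne_top ENNReal.ofReal_ne_top ENNReal.ofReal_ne_top
    have ht2 : ENNReal.ofReal ε⁻¹ * (W + ENNReal.ofReal δ) ≠ ⊤ :=
      ENNReal.mul_ne_top ENNReal.ofReal_ne_top
        (ENNReal.add_ne_top.mpr ⟨hWne, ENNReal.ofReal_ne_top⟩)
    have hRfin : ENNReal.ofReal C * ENNReal.ofReal (∫ x, ψ x ∂μ) +
        ENNReal.ofReal ε⁻¹ * (W + ENNReal.ofReal δ) ≠ ⊤ := ENNReal.add_ne_top.mpr ⟨ht1, ht2⟩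
    have hint0 : 0 ≤ ∫ x, φ x * f x ∂μ :=
      integral_nonneg fun x => mul_nonneg (hφ0 x) (hf0 x)
    have hfinal := ENNReal.toReal_mono hRfin hchain
    rw [ENNReal.toReal_ofReal hint0, ENNReal.toReal_add ht1 ht2, ENNReal.toReal_mul,
      ENNReal.toReal_mul, ENNReal.toReal_ofReal hC.le,
      ENNReal.toReal_ofReal (integral_nonneg hψ0),
      ENNReal.toReal_ofReal (inv_nonneg.mpr hε.le),
      ENNReal.toReal_add hWne ENNReal.ofReal_ne_top, ENNReal.toReal_ofReal hδ.le] at hfinal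
    have hexp : ε⁻¹ * (W.toReal + δ) = ε⁻¹ * W.toReal + ε⁻¹ * δ := mul_add _ _ _
    rw [one_div]
    linarith
  refine le_of_forall_pos_le_add fun η hη => ?_
  have h := main (ε * η) (mul_pos hε hη)
  have h2 : ε⁻¹ * (ε * η) = η := by field_simp
  linarith
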